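/- Let u₀ : (−1,1) → ℝ be u₀(x) = log(x² + 1) − log 2. Then for every s with 0 < |s| < 1, the supremum sup_{x ∈ (−1,1)} (s·x − u₀(x)) is attained at the unique point x₀(s) = (1 − √(1−s²))/s ∈ (−1,1), and its value is u₀*(s) = 1 − √(1−s²) − log(1 − √(1−s²)) + log(s²). -/

import Mathlib

/-- The boundary datum `u₀(x) = log(x²+1) - log 2` of Example 2.2. -/
noncomputable def ex0 (x : ℝ) : ℝ := Real.log (x ^ 2 + 1) - Real.log 2

/-- The Legendre transform of `u₀(x) = log(x²+1) - log 2` on `(-1,1)`: for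
`0 < |s| < 1` the supremum of `s·x - u₀(x)` over `(-1,1)` is attained exactly at
`x₀(s) = (1 - √(1-s²))/s`, with value `1 - √(1-s²) - log(1-√(1-s²)) + log(s²)`. -/
theorem stmt14 (s : ℝ) (hs0 : 0 < |s|) (hs1 : |s| < 1) :
    ∀ x₀ : ℝ, x₀ = (1 - Real.sqrt (1 - s ^ 2)) / s →
      x₀ ∈ Set.Ioo (-1 : ℝ) 1 ∧
      IsGreatest ((fun x => s * x - ex0 x) '' Set.Ioo (-1 : ℝ) 1)
        (s * x₀ - ex0 x₀) ∧
      (∀ x ∈ Set.Ioo (-1 : ℝ) 1, s * x - ex0 x = s * x₀ - ex0 x₀ → x = x₀) ∧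
      s * x₀ - ex0 x₀ =
        1 - Real.sqrt (1 - s ^ 2) - Real.log (1 - Real.sqrt (1 - s ^ 2)) +
          Real.log (s ^ 2) := by
  intro x₀ hx₀
  have hs : s ≠ 0 := by simpa [abs_pos] using hs0
  have hs2 : s ^ 2 < 1 := by nlinarith [sq_abs s, abs_nonneg s]
  have hs2p : 0 < s ^ 2 := by positivity
  set t := Real.sqrt (1 - s ^ 2) with htdef
  have ht2 : t ^ 2 = 1 - s ^ 2 := Real.sq_sqrt (by nlinarith)
  have ht0 : 0 < t := Real.sqrt_pos.mpr (by nlinarith)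
  have ht1 : t < 1 := by nlinarith
  have hsx₀ : s * x₀ = 1 - t := by rw [hx₀]; field_simp
  have h1x₀ : (1 + t) * x₀ = s := by
    rw [hx₀]; field_simp; nlinarith
  have hx₀sq : (x₀ ^ 2 + 1) * s ^ 2 = 2 * (1 - t) := by
    have : (s * x₀) ^ 2 = (1 - t) ^ 2 := by rw [hsx₀]
    nlinarith [this]
  have hx₀lt : x₀ ^ 2 < 1 := by nlinarith
  have hmem : x₀ ∈ Set.Ioo (-1 : ℝ) 1 := by
    have := abs_lt.mp (((sq_lt_one_iff_abs_lt_one (a := x₀)).mp hx₀lt))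
    exact ⟨this.1, this.2⟩
  -- the function and its derivative
  set f : ℝ → ℝ := fun x => s * x - Real.log (x ^ 2 + 1) with hf
  have hderiv : ∀ x : ℝ, HasDerivAt f (s - 2 * x / (x ^ 2 + 1)) x := by
    intro x
    have h1 : HasDerivAt (fun x : ℝ => x ^ 2 + 1) (2 * x) x := by
      simpa using (hasDerivAt_pow 2 x).add_const 1
    have h2 : HasDerivAt (fun x : ℝ => Real.log (x ^ 2 + 1)) (2 * x / (x ^ 2 + 1)) x :=
      h1.log (by positivity)
    exact (((hasDerivAt_id x).const_mul s).sub h2).congr_deriv (by ring)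
  have hcont : Continuous f :=
    continuous_iff_continuousAt.mpr fun x => (hderiv x).continuousAt
  have key : ∀ x : ℝ, s * (x ^ 2 + 1) - 2 * x = (x - x₀) * (s * x - (1 + t)) := by
    intro x
    linear_combination x * hsx₀ - h1x₀
  have hneg : ∀ x ∈ Set.Ioo (-1 : ℝ) 1, s * x - (1 + t) < 0 := by
    intro x hx
    have h1 : s * x ≤ |s| * |x| := by rw [← abs_mul]; exact le_abs_self _
    have h2 : |x| < 1 := abs_lt.mpr ⟨hx.1, hx.2⟩
    nlinarith [abs_nonneg x, abs_nonneg s]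
  have hdval : ∀ x : ℝ, s - 2 * x / (x ^ 2 + 1) =
      ((x - x₀) * (s * x - (1 + t))) / (x ^ 2 + 1) := by
    intro x
    rw [← key x]
    have hx1 : (x:ℝ) ^ 2 + 1 ≠ 0 := by positivity
    field_simp
  have hmono : StrictMonoOn f (Set.Ioc (-1 : ℝ) x₀) := by
    apply strictMonoOn_of_deriv_pos (convex_Ioc _ _) hcont.continuousOn
    intro x hx
    rw [interior_Ioc] at hx
    rw [(hderiv x).deriv, hdval x]
    have hxI : x ∈ Set.Ioo (-1 : ℝ) 1 := ⟨hx.1, hx.2.trans hmem.2⟩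
    exact div_pos (mul_pos_of_neg_of_neg (by linarith [hx.2]) (hneg x hxI)) (by positivity)
  have hanti : StrictAntiOn f (Set.Ico x₀ 1) := by
    apply strictAntiOn_of_deriv_neg (convex_Ico _ _) hcont.continuousOn
    intro x hx
    rw [interior_Ico] at hx
    rw [(hderiv x).deriv, hdval x]
    have hxI : x ∈ Set.Ioo (-1 : ℝ) 1 := ⟨hmem.1.trans hx.1, hx.2⟩
    apply div_neg_of_neg_of_pos _ (by positivity)
    exact mul_neg_of_pos_of_neg (by linarith [hx.1]) (hneg x hxI)
  have hlt : ∀ x ∈ Set.Ioo (-1 : ℝ) 1, x ≠ x₀ → f x < f x₀ := by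
    intro x hx hne
    rcases lt_or_gt_of_ne hne with h | h
    · exact hmono ⟨hx.1, h.le⟩ ⟨hmem.1, le_refl x₀⟩ h
    · exact hanti ⟨le_refl x₀, hmem.2⟩ ⟨h.le, hx.2⟩ h
  refine ⟨hmem, ⟨⟨x₀, hmem, rfl⟩, ?_⟩, ?_, ?_⟩
  · rintro y ⟨x, hx, rfl⟩
    by_cases hne : x = x₀
    · subst hne; exact le_refl _
    · have := hlt x hx hne
      simp only [ex0, hf] at this ⊢
      linarith
  · intro x hx heq
    by_contra hne
    have := hlt x hx hne
    simp only [ex0, hf] at this heq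
    linarith
  · have hlog : Real.log (x₀ ^ 2 + 1) = Real.log 2 + Real.log (1 - t) - Real.log (s ^ 2) := by
      have hx₀v : x₀ ^ 2 + 1 = 2 * (1 - t) / s ^ 2 := by
        field_simp at hx₀sq ⊢
        linarith [hx₀sq]
      rw [hx₀v, Real.log_div (by nlinarith) (by positivity),
        Real.log_mul (by norm_num) (by intro h; nlinarith)]
    simp only [ex0]
    rw [hlog, hsx₀]
    ring
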